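/- In the model G(n, p_n; C([n],3)), if p_n · n² / log n → ∞, then the probability that the multigraph is connected tends to 1 as n → ∞. -/

import Mathlib

open scoped ENNReal

/-- Bernoulli with success probability `min q 1`. -/
noncomputable def bern (q : ℝ≥0∞) : PMF Bool := PMF.bernoulli (min q 1).toNNReal
  (by simpa using ENNReal.toNNReal_mono ENNReal.one_ne_top (min_le_right q 1))

/-- For a hyperedge `H`, choose a uniformly random doubleton `D ⊆ H` and output `some D`
with probability `p` (an edge is placed on `D`), `none` otherwise. -/
noncomputable def edgePMF {n : ℕ} (p : ℝ≥0∞) (H : Finset (Fin n)) :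
    PMF (Option (Finset (Fin n))) :=
  if h : (H.powersetCard 2).Nonempty then
    (PMF.uniformOfFinset _ h).bind fun D =>
      (bern p).map fun b => if b then some D else none
  else PMF.pure none

/-- The random multigraph `G(n, p; 𝓗)`: for each hyperedge of the list `𝓗` independently,
choose a uniformly random doubleton and join its two vertices by an edge with probability `p`.
The resulting multigraph is recorded as the multiset of its edges (doubletons, with
multiplicity). -/
noncomputable def modelPMF {n : ℕ} (p : ℝ≥0∞) :
    List (Finset (Fin n)) → PMF (Multiset (Finset (Fin n)))
  | [] => PMF.pure 0
  | H :: T => (edgePMF p H).bind fun o =>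
      (modelPMF p T).map fun G => o.elim G (fun D => D ::ₘ G)

/-- Probability that a sample from `μ` lies in `S`. -/
noncomputable def prob {α : Type*} (μ : PMF α) (S : Set α) : ℝ≥0∞ := μ.toOuterMeasure S

/-- The complete `k`-uniform hypergraph on `[n]`, as a list of hyperedges. -/
noncomputable def allSets (n k : ℕ) : List (Finset (Fin n)) :=
  ((Finset.univ : Finset (Fin n)).powersetCard k).toList

/-- Degree of a vertex in a multigraph: number of edges incident to it, with multiplicity. -/
def degOf {n : ℕ} (v : Fin n) (G : Multiset (Finset (Fin n))) : ℕ :=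
  Multiset.card (G.filter fun D => v ∈ D)

/-- Poisson-Binomial: number of successes in independent trials with the given success
probabilities. -/
noncomputable def pbPMF : List ℝ≥0∞ → PMF ℕ
  | [] => PMF.pure 0
  | q :: T => (bern q).bind fun b => (pbPMF T).map fun m => if b then m + 1 else m

/-- Binomial distribution `Bin(m, q)` on `ℕ`. -/
noncomputable def binomPMF (m : ℕ) (q : ℝ≥0∞) : PMF ℕ := pbPMF (List.replicate m q)

open Filter

/-- The simple graph underlying a multigraph: `i` and `j` are adjacent when `i ≠ j` and the
pair `{i,j}` occurs as an edge of the multigraph. -/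
def toSimpleGraph {n : ℕ} (G : Multiset (Finset (Fin n))) : SimpleGraph (Fin n) where
  Adj i j := i ≠ j ∧ ({i, j} : Finset (Fin n)) ∈ G
  symm := by
    constructor
    intro i j h
    exact ⟨h.1.symm, by rw [Finset.pair_comm]; exact h.2⟩
  loopless := by constructor; intro i h; exact h.1 rfl


/-! ### Auxiliary material for the connectivity theorem -/

section ConnAux

open Finset

variable {n : ℕ}

/-- Doubletons not crossing the cut given by `M`. -/
def NCset (M : Finset (Fin n)) : Set (Finset (Fin n)) := {D | D ⊆ M ∨ D ∩ M = ∅}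

instance NCset.decPred (M : Finset (Fin n)) : DecidablePred (· ∈ NCset M) := fun D =>
  decidable_of_iff (D ⊆ M ∨ D ∩ M = ∅) Iff.rfl

/-- Per-hyperedge allowed outcomes. -/
def optOK (A : Set (Finset (Fin n))) : Set (Option (Finset (Fin n))) :=
  {o | ∀ D, o = some D → D ∈ A}

lemma prob_le_one {α : Type*} (μ : PMF α) (S : Set α) : prob μ S ≤ 1 := by
  rw [prob, PMF.toOuterMeasure_apply]
  refine le_trans (ENNReal.tsum_le_tsum fun a => Set.indicator_le_self _ _ a) ?_
  rw [μ.tsum_coe]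

lemma prob_compl {α : Type*} (μ : PMF α) (S : Set α) : prob μ S = 1 - prob μ Sᶜ := by
  have h : prob μ S + prob μ Sᶜ = 1 := by
    rw [prob, prob, PMF.toOuterMeasure_apply, PMF.toOuterMeasure_apply, ← ENNReal.tsum_add,
      ← μ.tsum_coe]
    refine tsum_congr fun a => ?_
    by_cases ha : a ∈ S <;> simp [Set.indicator_apply, ha]
  exact ENNReal.eq_sub_of_add_eq (lt_of_le_of_lt (prob_le_one μ Sᶜ) ENNReal.one_lt_top).ne h

lemma mem_NC_in {M : Finset (Fin n)} {x y : Fin n} (hx : x ∈ M) (hy : y ∈ M) :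
    ({x, y} : Finset (Fin n)) ∈ NCset M := by
  left; intro z hz
  rcases Finset.mem_insert.mp hz with rfl | hz
  · exact hx
  · rwa [Finset.mem_singleton.mp hz]

lemma mem_NC_out {M : Finset (Fin n)} {x y : Fin n} (hx : x ∉ M) (hy : y ∉ M) :
    ({x, y} : Finset (Fin n)) ∈ NCset M := by
  right
  rw [Finset.eq_empty_iff_forall_notMem]
  intro z hz
  rw [Finset.mem_inter] at hz
  rcases Finset.mem_insert.mp hz.1 with rfl | h
  · exact hx hz.2
  · rw [Finset.mem_singleton.mp h] at hz; exact hy hz.2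

lemma not_mem_NC {M : Finset (Fin n)} {x y : Fin n} (hx : x ∈ M) (hy : y ∉ M) :
    ({x, y} : Finset (Fin n)) ∉ NCset M := by
  rintro (hsub | hemp)
  · exact hy (hsub (by simp))
  · rw [Finset.eq_empty_iff_forall_notMem] at hemp
    exact hemp x (Finset.mem_inter.mpr ⟨by simp, hx⟩)

lemma not_mem_NC' {M : Finset (Fin n)} {x y : Fin n} (hx : x ∉ M) (hy : y ∈ M) :
    ({x, y} : Finset (Fin n)) ∉ NCset M := by
  rw [Finset.pair_comm]; exact not_mem_NC hy hx

lemma pairs_triple {a b c : Fin n} (hab : a ≠ b) (hac : a ≠ c) (hbc : b ≠ c) :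
    ({a, b, c} : Finset (Fin n)).powersetCard 2
      = ({{a, b}, {a, c}, {b, c}} : Finset (Finset (Fin n))) := by
  ext D
  simp only [Finset.mem_powersetCard, Finset.mem_insert, Finset.mem_singleton]
  constructor
  · rintro ⟨hsub, hcard⟩
    obtain ⟨x, y, hxy, rfl⟩ := Finset.card_eq_two.mp hcard
    have hx : x ∈ ({a, b, c} : Finset (Fin n)) := hsub (by simp)
    have hy : y ∈ ({a, b, c} : Finset (Fin n)) := hsub (by simp)
    simp only [Finset.mem_insert, Finset.mem_singleton] at hx hy
    rcases hx with rfl | rfl | rfl <;> rcases hy with rfl | rfl | rfl <;>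
      first
        | exact absurd rfl hxy
        | simp [Finset.pair_comm x y]
  · have h2 : ∀ u v : Fin n, u ≠ v → ({u, v} : Finset (Fin n)).card = 2 :=
      fun u v huv => Finset.card_pair huv
    rintro (rfl | rfl | rfl)
    · exact ⟨by intro z hz; simp at hz; rcases hz with rfl | rfl <;> simp, h2 _ _ hab⟩
    · exact ⟨by intro z hz; simp at hz; rcases hz with rfl | rfl <;> simp, h2 _ _ hac⟩
    · exact ⟨by intro z hz; simp at hz; rcases hz with rfl | rfl <;> simp, h2 _ _ hbc⟩

lemma sum_w_le (p : ℝ≥0∞) {H M : Finset (Fin n)} (hH : H.card = 3)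
    (hc1 : (H ∩ M).Nonempty) (hc2 : (H \ M).Nonempty) :
    (∑ D ∈ H.powersetCard 2, if D ∈ NCset M then (1 : ℝ≥0∞) else 1 - p)
      ≤ 1 + (1 - p) + (1 - p) := by
  classical
  obtain ⟨a, b, c, hab, hac, hbc, rfl⟩ := Finset.card_eq_three.mp hH
  rw [pairs_triple hab hac hbc]
  have hcab : c ∉ ({a, b} : Finset (Fin n)) := by
    simp only [Finset.mem_insert, Finset.mem_singleton]
    push_neg
    exact ⟨Ne.symm hac, Ne.symm hbc⟩
  have hbac : b ∉ ({a, c} : Finset (Fin n)) := by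
    simp only [Finset.mem_insert, Finset.mem_singleton]
    push_neg
    exact ⟨Ne.symm hab, hbc⟩
  have hne1 : ({a, b} : Finset (Fin n)) ∉ ({({a, c} : Finset (Fin n)), {b, c}} : Finset (Finset (Fin n))) := by
    simp only [Finset.mem_insert, Finset.mem_singleton]
    push_neg
    constructor
    · intro hEq; exact hcab (hEq ▸ (by simp : c ∈ ({a, c} : Finset (Fin n))))
    · intro hEq; exact hcab (hEq ▸ (by simp : c ∈ ({b, c} : Finset (Fin n))))
  have hne2 : ({a, c} : Finset (Fin n)) ∉ ({({b, c} : Finset (Fin n))} : Finset (Finset (Fin n))) := by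
    rw [Finset.mem_singleton]
    intro hEq; exact hbac (hEq ▸ (by simp : b ∈ ({b, c} : Finset (Fin n))))
  rw [Finset.sum_insert hne1, Finset.sum_insert hne2, Finset.sum_singleton]
  have hmem : ∀ x : Fin n, x ∈ ({a, b, c} : Finset (Fin n)) ↔ x = a ∨ x = b ∨ x = c := by
    intro x; simp
  by_cases ha : a ∈ M <;> by_cases hb : b ∈ M <;> by_cases hc : c ∈ M
  · -- all in M: contradicts hc2
    exfalso
    obtain ⟨x, hx⟩ := hc2
    rw [Finset.mem_sdiff, hmem] at hx
    rcases hx.1 with rfl | rfl | rfl <;> exact hx.2 (by assumption)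
  · rw [if_pos (mem_NC_in ha hb), if_neg (not_mem_NC ha hc), if_neg (not_mem_NC hb hc)]
    exact le_of_eq (by ring)
  · rw [if_neg (not_mem_NC ha hb), if_pos (mem_NC_in ha hc), if_neg (not_mem_NC' hb hc)]
    exact le_of_eq (by ring)
  · rw [if_neg (not_mem_NC ha hb), if_neg (not_mem_NC ha hc), if_pos (mem_NC_out hb hc)]
    exact le_of_eq (by ring)
  · rw [if_neg (not_mem_NC' ha hb), if_neg (not_mem_NC' ha hc), if_pos (mem_NC_in hb hc)]
    exact le_of_eq (by ring)
  · rw [if_neg (not_mem_NC' ha hb), if_pos (mem_NC_out ha hc), if_neg (not_mem_NC hb hc)]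
    exact le_of_eq (by ring)
  · rw [if_pos (mem_NC_out ha hb), if_neg (not_mem_NC' ha hc), if_neg (not_mem_NC' hb hc)]
    exact le_of_eq (by ring)
  · -- all out of M: contradicts hc1
    exfalso
    obtain ⟨x, hx⟩ := hc1
    rw [Finset.mem_inter, hmem] at hx
    rcases hx.1 with rfl | rfl | rfl <;> exact (by assumption : _ ∉ M) hx.2

lemma edge_prob_eq (p : ℝ≥0∞) (hp : p ≤ 1) {H : Finset (Fin n)} (hH : H.card = 3)
    (A : Set (Finset (Fin n))) [DecidablePred (· ∈ A)] :
    prob (edgePMF p H) (optOK A)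
      = 3⁻¹ * ∑ D ∈ H.powersetCard 2, (if D ∈ A then (1 : ℝ≥0∞) else 1 - p) := by
  classical
  have hcard : (H.powersetCard 2).card = 3 := by
    rw [Finset.card_powersetCard, hH]
    decide
  have hne : (H.powersetCard 2).Nonempty := by
    rw [← Finset.card_pos, hcard]; norm_num
  have hmin : min p 1 = p := min_eq_left hp
  have hterm : ∀ D : Finset (Fin n),
      (PMF.uniformOfFinset _ hne) D
        * (((bern p).map fun b => if b then some D else none).toOuterMeasure (optOK A))
      = if D ∈ H.powersetCard 2 then 3⁻¹ * (if D ∈ A then (1 : ℝ≥0∞) else 1 - p) else 0 := by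
    intro D
    rw [PMF.toOuterMeasure_map_apply, PMF.uniformOfFinset_apply]
    by_cases hD : D ∈ H.powersetCard 2
    · rw [if_pos hD, if_pos hD, hcard]
      congr 1
      rw [PMF.toOuterMeasure_apply_fintype, Fintype.sum_bool]
      have hfalse : (false : Bool) ∈ (fun b => if b then some D else none) ⁻¹' optOK A := by
        intro E hE; simp at hE
      have hpt : p ≠ ⊤ := ne_top_of_le_ne_top ENNReal.one_ne_top hp
      have hbf : bern p false = 1 - p := by
        simp [bern, PMF.bernoulli_apply, hmin, ENNReal.coe_sub, ENNReal.coe_toNNReal hpt]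
      have hbt : bern p true = p := by
        simp [bern, PMF.bernoulli_apply, hmin, ENNReal.coe_toNNReal hpt]
      by_cases hDA : D ∈ A
      · have htrue : (true : Bool) ∈ (fun b => if b then some D else none) ⁻¹' optOK A := by
          intro E hE
          simp only [if_true] at hE
          obtain rfl : D = E := Option.some_inj.mp hE
          exact hDA
        rw [Set.indicator_of_mem htrue, Set.indicator_of_mem hfalse, hbt, hbf, if_pos hDA]
        exact add_tsub_cancel_of_le hp
      · have htrue : (true : Bool) ∉ (fun b => if b then some D else none) ⁻¹' optOK A := by
          intro hmem
          exact hDA (hmem D (by simp))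
        rw [Set.indicator_of_notMem htrue, Set.indicator_of_mem hfalse, hbf, if_neg hDA,
          zero_add]
    · rw [if_neg hD, if_neg hD, zero_mul]
  rw [prob, edgePMF, dif_pos hne, PMF.toOuterMeasure_bind_apply]
  calc (∑' D, (PMF.uniformOfFinset _ hne) D
        * (((bern p).map fun b => if b then some D else none).toOuterMeasure (optOK A)))
      = ∑ D ∈ H.powersetCard 2, (3⁻¹ * (if D ∈ A then (1 : ℝ≥0∞) else 1 - p)) := by
        rw [tsum_eq_sum (s := H.powersetCard 2) (fun D hD => by rw [hterm D, if_neg hD])]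
        exact Finset.sum_congr rfl fun D hD => by rw [hterm D, if_pos hD]
    _ = 3⁻¹ * ∑ D ∈ H.powersetCard 2, (if D ∈ A then (1 : ℝ≥0∞) else 1 - p) := by
        rw [Finset.mul_sum]

lemma edge_prob_cross_le {pr : ℝ} (h0 : 0 ≤ pr) (h1 : pr ≤ 1)
    {H M : Finset (Fin n)} (hH : H.card = 3)
    (hc1 : (H ∩ M).Nonempty) (hc2 : (H \ M).Nonempty) :
    prob (edgePMF (ENNReal.ofReal pr) H) (optOK (NCset M))
      ≤ ENNReal.ofReal (1 - 2 * pr / 3) := by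
  classical
  have hp : ENNReal.ofReal pr ≤ 1 := ENNReal.ofReal_le_one.mpr h1
  rw [edge_prob_eq _ hp hH]
  have hsub : (1 : ℝ≥0∞) - ENNReal.ofReal pr = ENNReal.ofReal (1 - pr) := by
    rw [ENNReal.ofReal_sub _ h0, ENNReal.ofReal_one]
  have hle := sum_w_le (ENNReal.ofReal pr) hH hc1 hc2
  have key : (3 : ℝ≥0∞)⁻¹ * (1 + (1 - ENNReal.ofReal pr) + (1 - ENNReal.ofReal pr))
      = ENNReal.ofReal (1 - 2 * pr / 3) := by
    rw [hsub]
    rw [show (1 : ℝ≥0∞) = ENNReal.ofReal 1 from ENNReal.ofReal_one.symm]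
    rw [← ENNReal.ofReal_add (by norm_num) (by linarith), ← ENNReal.ofReal_add
      (by linarith) (by linarith)]
    rw [show ((3 : ℝ≥0∞))⁻¹ = ENNReal.ofReal (3 : ℝ)⁻¹ by
      rw [ENNReal.ofReal_inv_of_pos (by norm_num)]
      norm_num]
    rw [← ENNReal.ofReal_mul (by norm_num)]
    congr 1
    ring
  rw [← key]
  exact mul_le_mul_right hle _

lemma edge_some_support {p : ℝ≥0∞} {H D : Finset (Fin n)}
    (h : some D ∈ (edgePMF p H).support) : D.card = 2 := by
  classical
  by_cases hne : (H.powersetCard 2).Nonempty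
  · rw [edgePMF, dif_pos hne, PMF.support_bind] at h
    rw [Set.mem_iUnion₂] at h
    obtain ⟨E, hE, hmem⟩ := h
    rw [PMF.support_map] at hmem
    obtain ⟨b, _, hb⟩ := hmem
    by_cases hbb : b = true
    · subst hbb
      simp only [if_true, Option.some_inj] at hb
      subst hb
      rw [PMF.support_uniformOfFinset, Finset.mem_coe, Finset.mem_powersetCard] at hE
      exact hE.2
    · rw [Bool.not_eq_true] at hbb
      subst hbb
      simp at hb
  · rw [edgePMF, dif_neg hne, PMF.support_pure] at h
    simp at h

lemma support_model (p : ℝ≥0∞) :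
    ∀ (L : List (Finset (Fin n))) (G : Multiset (Finset (Fin n))),
      G ∈ (modelPMF p L).support → ∀ D ∈ G, D.card = 2
  | [], G, hG => by
    rw [modelPMF, PMF.support_pure] at hG
    subst hG
    intro D hD
    exact absurd hD (Multiset.notMem_zero D)
  | H :: T, G, hG => by
    rw [modelPMF, PMF.support_bind] at hG
    rw [Set.mem_iUnion₂] at hG
    obtain ⟨o, ho, hmem⟩ := hG
    rw [PMF.support_map] at hmem
    obtain ⟨G', hG', rfl⟩ := hmem
    intro D hD
    match o with
    | none => exact support_model p T G' hG' D hD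
    | some E =>
      simp only [Option.elim] at hD
      rcases Multiset.mem_cons.mp hD with rfl | hD'
      · exact edge_some_support ho
      · exact support_model p T G' hG' D hD'

lemma prob_model_forall (p : ℝ≥0∞) (A : Set (Finset (Fin n))) :
    ∀ L : List (Finset (Fin n)),
      prob (modelPMF p L) {G | ∀ D ∈ G, D ∈ A}
        = (L.map fun H => prob (edgePMF p H) (optOK A)).prod
  | [] => by
    rw [modelPMF, prob, PMF.toOuterMeasure_pure_apply, List.map_nil, List.prod_nil,
      if_pos]
    intro D hD
    exact absurd hD (Multiset.notMem_zero D)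
  | H :: T => by
    rw [modelPMF, List.map_cons, List.prod_cons, prob, PMF.toOuterMeasure_bind_apply]
    have key : ∀ o : Option (Finset (Fin n)),
        ((modelPMF p T).map fun G => o.elim G fun D => D ::ₘ G).toOuterMeasure
            {G | ∀ D ∈ G, D ∈ A}
          = Set.indicator (optOK A)
              (fun _ => prob (modelPMF p T) {G | ∀ D ∈ G, D ∈ A}) o := by
      intro o
      rw [PMF.toOuterMeasure_map_apply]
      match o with
      | none =>
        rw [Set.indicator_of_mem
          (show (none : Option (Finset (Fin n))) ∈ optOK A from
            fun E hE => by cases hE)]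
        rfl
      | some E =>
        by_cases hE : E ∈ A
        · have hpre : ((fun G => Option.elim (some E) G fun D => D ::ₘ G) ⁻¹'
              {G | ∀ D ∈ G, D ∈ A}) = {G | ∀ D ∈ G, D ∈ A} := by
            ext G
            simp only [Set.mem_preimage, Option.elim, Set.mem_setOf_eq]
            constructor
            · intro hall D hD
              exact hall D (Multiset.mem_cons_of_mem hD)
            · intro hall D hD
              rcases Multiset.mem_cons.mp hD with rfl | hD'
              · exact hE
              · exact hall D hD'
          rw [hpre, Set.indicator_of_mem
            (show some E ∈ optOK A from fun D hD => (Option.some_inj.mp hD) ▸ hE)]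
          rfl
        · have hpre : ((fun G => Option.elim (some E) G fun D => D ::ₘ G) ⁻¹'
              {G | ∀ D ∈ G, D ∈ A}) = ∅ := by
            ext G
            simp only [Set.mem_preimage, Option.elim, Set.mem_setOf_eq, Set.mem_empty_iff_false,
              iff_false, not_forall]
            exact ⟨E, Multiset.mem_cons_self E G, hE⟩
          rw [hpre, Set.indicator_of_notMem
            (show some E ∉ optOK A from fun hmem => hE (hmem E rfl))]
          exact (modelPMF p T).toOuterMeasure.empty
    calc (∑' o, (edgePMF p H) o
          * ((modelPMF p T).map fun G => o.elim G fun D => D ::ₘ G).toOuterMeasure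
              {G | ∀ D ∈ G, D ∈ A})
        = ∑' o, Set.indicator (optOK A) (edgePMF p H) o
            * prob (modelPMF p T) {G | ∀ D ∈ G, D ∈ A} := by
          refine tsum_congr fun o => ?_
          rw [key o]
          by_cases ho : o ∈ optOK A
          · rw [Set.indicator_of_mem ho, Set.indicator_of_mem ho]
          · rw [Set.indicator_of_notMem ho, Set.indicator_of_notMem ho, mul_zero, zero_mul]
      _ = prob (edgePMF p H) (optOK A) * prob (modelPMF p T) {G | ∀ D ∈ G, D ∈ A} := by
          rw [ENNReal.tsum_mul_right]
          congr 1
          rw [prob, PMF.toOuterMeasure_apply]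
      _ = prob (edgePMF p H) (optOK A) * (T.map fun H => prob (edgePMF p H) (optOK A)).prod := by
          rw [prob_model_forall p A T]

lemma exists_cut (hn : 1 ≤ n) (G : Multiset (Finset (Fin n)))
    (hcard : ∀ D ∈ G, Finset.card D = 2)
    (hG : ¬ (toSimpleGraph G).Connected) :
    ∃ M : Finset (Fin n), M.Nonempty ∧ 2 * M.card ≤ n ∧ ∀ D ∈ G, D ∈ NCset M := by
  classical
  have hne : Nonempty (Fin n) := ⟨⟨0, hn⟩⟩
  rw [SimpleGraph.connected_iff] at hG
  push_neg at hG
  have hpre : ¬ (toSimpleGraph G).Preconnected := fun hp => (hG hp).false ⟨0, hn⟩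
  rw [SimpleGraph.Preconnected] at hpre
  push_neg at hpre
  obtain ⟨i, j, hij⟩ := hpre
  set C : Finset (Fin n) := Finset.univ.filter fun x => (toSimpleGraph G).Reachable i x with hC
  have hiC : i ∈ C := by
    rw [hC, Finset.mem_filter]
    exact ⟨Finset.mem_univ i, SimpleGraph.Reachable.refl i⟩
  have hjC : j ∉ C := by
    rw [hC, Finset.mem_filter]
    rintro ⟨-, hr⟩
    exact hij hr
  have key : ∀ D ∈ G, D ∈ NCset C := by
    intro D hD
    by_cases hmeets : (D ∩ C).Nonempty
    · left
      obtain ⟨x, hx⟩ := hmeets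
      rw [Finset.mem_inter] at hx
      intro y hy
      by_cases hxy : x = y
      · exact hxy ▸ hx.2
      · have hDxy : ({x, y} : Finset (Fin n)) = D := by
          apply Finset.eq_of_subset_of_card_le
          · intro z hz
            rcases Finset.mem_insert.mp hz with rfl | hz'
            · exact hx.1
            · rwa [Finset.mem_singleton.mp hz']
          · rw [hcard D hD, Finset.card_pair hxy]
        have hadj : (toSimpleGraph G).Adj x y := ⟨hxy, hDxy ▸ hD⟩
        have hrx : (toSimpleGraph G).Reachable i x := (Finset.mem_filter.mp hx.2).2
        have hry : (toSimpleGraph G).Reachable i y := hrx.trans hadj.reachable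
        rw [hC, Finset.mem_filter]
        exact ⟨Finset.mem_univ y, hry⟩
    · right
      rwa [Finset.not_nonempty_iff_eq_empty] at hmeets
  have hCn : C.card ≤ n := by
    have := Finset.card_le_univ C
    rwa [Fintype.card_fin] at this
  by_cases hsize : 2 * C.card ≤ n
  · exact ⟨C, ⟨i, hiC⟩, hsize, key⟩
  · refine ⟨Cᶜ, ⟨j, Finset.mem_compl.mpr hjC⟩, ?_, ?_⟩
    · rw [Finset.card_compl, Fintype.card_fin]
      omega
    · intro D hD
      rcases key D hD with hsub | hemp
      · right
        rw [Finset.eq_empty_iff_forall_notMem]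
        intro z hz
        rw [Finset.mem_inter, Finset.mem_compl] at hz
        exact hz.2 (hsub hz.1)
      · left
        intro z hz
        rw [Finset.mem_compl]
        intro hzC
        rw [Finset.eq_empty_iff_forall_notMem] at hemp
        exact hemp z (Finset.mem_inter.mpr ⟨hz, hzC⟩)

lemma count_crossing (M : Finset (Fin n)) :
    M.card * ((n - M.card).choose 2)
      ≤ (((Finset.univ : Finset (Fin n)).powersetCard 3).filter
          fun H => (H ∩ M).Nonempty ∧ (H \ M).Nonempty).card := by
  classical
  set T := (M ×ˢ (Mᶜ.powersetCard 2)).image fun q => insert q.1 q.2 with hT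
  have hinj : Set.InjOn (fun q : Fin n × Finset (Fin n) => insert q.1 q.2)
      (M ×ˢ (Mᶜ.powersetCard 2) : Finset _) := by
    rintro ⟨u, P⟩ hu ⟨v, Q⟩ hv hEq
    simp only [Finset.coe_mem, Finset.mem_coe, Finset.mem_product] at hu hv
    obtain ⟨huM, huP⟩ := hu
    obtain ⟨hvM, hvQ⟩ := hv
    rw [Finset.mem_powersetCard] at huP hvQ
    have huP' : u ∉ P := fun hmem => (Finset.mem_compl.mp (huP.1 hmem)) huM
    have hvQ' : v ∉ Q := fun hmem => (Finset.mem_compl.mp (hvQ.1 hmem)) hvM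
    simp only at hEq
    have huv : u = v := by
      have hu' : u ∈ insert v Q := hEq ▸ Finset.mem_insert_self u P
      rcases Finset.mem_insert.mp hu' with rfl | hmem
      · rfl
      · exact absurd huM (Finset.mem_compl.mp (hvQ.1 hmem))
    subst huv
    have : P = Q := by
      have h1 := congrArg (fun s => Finset.erase s u) hEq
      simpa [Finset.erase_insert huP', Finset.erase_insert hvQ'] using h1
    simp [this]
  have hsubT : T ⊆ ((Finset.univ : Finset (Fin n)).powersetCard 3).filter
      fun H => (H ∩ M).Nonempty ∧ (H \ M).Nonempty := by
    intro H hH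
    rw [hT, Finset.mem_image] at hH
    obtain ⟨⟨u, P⟩, hq, rfl⟩ := hH
    rw [Finset.mem_product] at hq
    obtain ⟨huM, hP⟩ := hq
    rw [Finset.mem_powersetCard] at hP
    have huP : u ∉ P := fun hmem => (Finset.mem_compl.mp (hP.1 hmem)) huM
    rw [Finset.mem_filter, Finset.mem_powersetCard]
    refine ⟨⟨Finset.subset_univ _, ?_⟩, ⟨u, ?_⟩, ?_⟩
    · rw [Finset.card_insert_of_notMem huP, hP.2]
    · rw [Finset.mem_inter]
      exact ⟨Finset.mem_insert_self u P, huM⟩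
    · obtain ⟨x, hx⟩ := Finset.card_pos.mp (hP.2 ▸ (by norm_num : 0 < 2))
      exact ⟨x, Finset.mem_sdiff.mpr ⟨Finset.mem_insert_of_mem hx,
        Finset.mem_compl.mp (hP.1 hx)⟩⟩
  have hcardT : T.card = M.card * ((n - M.card).choose 2) := by
    rw [hT, Finset.card_image_of_injOn hinj, Finset.card_product, Finset.card_powersetCard,
      Finset.card_compl, Fintype.card_fin]
  calc M.card * ((n - M.card).choose 2) = T.card := hcardT.symm
    _ ≤ _ := Finset.card_le_card hsubT

lemma prob_NC_le {pr : ℝ} (h0 : 0 ≤ pr) (h1 : pr ≤ 1) (M : Finset (Fin n)) :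
    prob (modelPMF (ENNReal.ofReal pr) (allSets n 3)) {G | ∀ D ∈ G, D ∈ NCset M}
      ≤ ENNReal.ofReal (1 - 2 * pr / 3) ^ (M.card * ((n - M.card).choose 2)) := by
  classical
  set x := ENNReal.ofReal (1 - 2 * pr / 3) with hx
  set f : Finset (Fin n) → ℝ≥0∞ :=
    fun H => prob (edgePMF (ENNReal.ofReal pr) H) (optOK (NCset M)) with hf
  have hstep : prob (modelPMF (ENNReal.ofReal pr) (allSets n 3)) {G | ∀ D ∈ G, D ∈ NCset M}
      = ∏ H ∈ (Finset.univ : Finset (Fin n)).powersetCard 3, f H := by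
    rw [prob_model_forall, allSets, Finset.prod_map_toList]
  rw [hstep]
  set Filt := (((Finset.univ : Finset (Fin n)).powersetCard 3).filter
    fun H => (H ∩ M).Nonempty ∧ (H \ M).Nonempty) with hFilt
  have hsub : Filt ⊆ (Finset.univ : Finset (Fin n)).powersetCard 3 := Finset.filter_subset _ _
  have hprod1 : ∏ H ∈ (Finset.univ : Finset (Fin n)).powersetCard 3, f H
      ≤ ∏ H ∈ Filt, f H := by
    rw [← Finset.prod_sdiff hsub]
    calc (∏ H ∈ ((Finset.univ : Finset (Fin n)).powersetCard 3) \ Filt, f H) * ∏ H ∈ Filt, f H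
        ≤ 1 * ∏ H ∈ Filt, f H := by
          refine mul_le_mul_left (Finset.prod_le_one ?_ ?_) _
          · intro H _; exact zero_le
          · intro H _; exact prob_le_one _ _
      _ = ∏ H ∈ Filt, f H := one_mul _
  have hprod2 : ∏ H ∈ Filt, f H ≤ x ^ Filt.card := by
    rw [← Finset.prod_const]
    refine Finset.prod_le_prod' ?_
    intro H hH
    rw [hFilt, Finset.mem_filter, Finset.mem_powersetCard] at hH
    exact edge_prob_cross_le h0 h1 hH.1.2 hH.2.1 hH.2.2
  have hx1 : x ≤ 1 := by
    rw [hx]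
    exact ENNReal.ofReal_le_one.mpr (by linarith)
  calc ∏ H ∈ (Finset.univ : Finset (Fin n)).powersetCard 3, f H
      ≤ x ^ Filt.card := le_trans hprod1 hprod2
    _ ≤ x ^ (M.card * ((n - M.card).choose 2)) :=
        pow_le_pow_of_le_one zero_le hx1 (count_crossing M)

lemma real_term_bound {m : ℕ} {pr : ℝ} (h0 : 0 ≤ pr) (h1 : pr ≤ 1) (hn : 8 ≤ n)
    (hlog : 72 * Real.log n ≤ pr * (n : ℝ) ^ 2) (hm1 : 1 ≤ m) (hm2 : 2 * m ≤ n) :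
    (n.choose m : ℝ) * (1 - 2 * pr / 3) ^ (m * ((n - m).choose 2))
      ≤ (((n : ℝ)) ^ 2)⁻¹ := by
  have hN8 : (8 : ℝ) ≤ (n : ℝ) := by exact_mod_cast hn
  have hN0 : (0 : ℝ) < (n : ℝ) := by linarith
  have hN1 : (1 : ℝ) ≤ (n : ℝ) := by linarith
  have hb0 : (0 : ℝ) ≤ 1 - 2 * pr / 3 := by linarith
  have hbexp : 1 - 2 * pr / 3 ≤ Real.exp (-(2 * pr / 3)) := by
    have hx := Real.add_one_le_exp (-(2 * pr / 3))
    linarith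
  have hmn : m ≤ n := by omega
  have hm0 : (1 : ℝ) ≤ (m : ℝ) := by exact_mod_cast hm1
  have hm2' : (m : ℝ) ≤ (n : ℝ) / 2 := by
    have h2 : ((2 * m : ℕ) : ℝ) ≤ (n : ℝ) := Nat.cast_le.mpr hm2
    push_cast at h2; linarith
  have hk : ((n - m : ℕ) : ℝ) = (n : ℝ) - m := by
    rw [Nat.cast_sub hmn]
  have hkge : (n : ℝ) / 2 ≤ ((n - m : ℕ) : ℝ) := by rw [hk]; linarith
  have hk1ge : (n : ℝ) / 4 ≤ ((n - m : ℕ) : ℝ) - 1 := by rw [hk]; linarith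
  have hchoosege : (n : ℝ) ^ 2 / 16 ≤ ((n - m).choose 2 : ℝ) := by
    rw [Nat.cast_choose_two]
    have hmul : (n : ℝ) / 2 * ((n : ℝ) / 4)
        ≤ ((n - m : ℕ) : ℝ) * (((n - m : ℕ) : ℝ) - 1) :=
      mul_le_mul hkge hk1ge (by linarith) (by positivity)
    nlinarith [hmul]
  have hlog0 : 0 ≤ Real.log n := Real.log_nonneg hN1
  set c := (n - m).choose 2 with hcdef
  have hElb : 3 * (m : ℝ) * Real.log n ≤ 2 * pr / 3 * ((m : ℝ) * (c : ℝ)) := by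
    have hint1 : 2 * pr / 3 * ((m : ℝ) * ((n : ℝ) ^ 2 / 16))
        ≤ 2 * pr / 3 * ((m : ℝ) * (c : ℝ)) := by
      apply mul_le_mul_of_nonneg_left _ (by linarith : (0:ℝ) ≤ 2 * pr / 3)
      exact mul_le_mul_of_nonneg_left hchoosege (by linarith)
    have hint2 : (m : ℝ) / 24 * (72 * Real.log n) ≤ (m : ℝ) / 24 * (pr * (n : ℝ) ^ 2) :=
      mul_le_mul_of_nonneg_left hlog (by linarith)
    nlinarith [hint1, hint2]
  have hchoose_le : (n.choose m : ℝ) ≤ (n : ℝ) ^ m := by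
    calc (n.choose m : ℝ) ≤ ((n ^ m : ℕ) : ℝ) := Nat.cast_le.mpr (Nat.choose_le_pow n m)
      _ = (n : ℝ) ^ m := by push_cast; ring
  have hpow : (1 - 2 * pr / 3) ^ (m * c) ≤ ((n : ℝ) ^ (3 * m))⁻¹ := by
    calc (1 - 2 * pr / 3) ^ (m * c)
        ≤ Real.exp (-(2 * pr / 3)) ^ (m * c) := pow_le_pow_left₀ hb0 hbexp _
      _ = Real.exp (((m * c : ℕ) : ℝ) * (-(2 * pr / 3))) := (Real.exp_nat_mul _ _).symm
      _ ≤ Real.exp (-(3 * (m : ℝ) * Real.log n)) := by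
          rw [Real.exp_le_exp]
          push_cast
          nlinarith [hElb]
      _ = ((n : ℝ) ^ (3 * m))⁻¹ := by
          rw [show -(3 * (m : ℝ) * Real.log n) = ((3 * m : ℕ) : ℝ) * (-Real.log n) by
            push_cast; ring]
          rw [Real.exp_nat_mul, Real.exp_neg, Real.exp_log hN0, inv_pow]
  calc (n.choose m : ℝ) * (1 - 2 * pr / 3) ^ (m * c)
      ≤ (n : ℝ) ^ m * ((n : ℝ) ^ (3 * m))⁻¹ := by
        refine mul_le_mul hchoose_le hpow (by positivity) (by positivity)
    _ = ((n : ℝ) ^ (2 * m))⁻¹ := by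
        rw [show 3 * m = m + 2 * m by ring, pow_add, mul_inv, ← mul_assoc,
          mul_inv_cancel₀ (by positivity), one_mul]
    _ ≤ ((n : ℝ) ^ 2)⁻¹ := by
        have h2m : (n : ℝ) ^ 2 ≤ (n : ℝ) ^ (2 * m) :=
          pow_le_pow_right₀ hN1 (by omega)
        exact inv_anti₀ (by positivity) h2m

lemma main_bound {pr : ℝ} (h0 : 0 ≤ pr) (h1 : pr ≤ 1) (hn : 8 ≤ n)
    (hlog : 72 * Real.log n ≤ pr * (n : ℝ) ^ 2) :
    prob (modelPMF (ENNReal.ofReal pr) (allSets n 3)) {G | (toSimpleGraph G).Connected}ᶜ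
      ≤ ENNReal.ofReal ((n : ℝ))⁻¹ := by
  classical
  set μ := modelPMF (ENNReal.ofReal pr) (allSets n 3) with hμ
  set 𝓜 := (Finset.univ : Finset (Finset (Fin n))).filter
    (fun M => M.Nonempty ∧ 2 * M.card ≤ n) with h𝓜
  set x := ENNReal.ofReal (1 - 2 * pr / 3) with hx
  have hsub : {G | (toSimpleGraph G).Connected}ᶜ ∩ μ.support
      ⊆ ⋃ M ∈ 𝓜, {G | ∀ D ∈ G, D ∈ NCset M} := by
    rintro G ⟨hG, hsup⟩
    obtain ⟨M, hMne, hMcard, hMnc⟩ := exists_cut (by omega) G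
      (support_model _ _ G hsup) hG
    have hM𝓜 : M ∈ 𝓜 := by
      rw [h𝓜, Finset.mem_filter]
      exact ⟨Finset.mem_univ M, hMne, hMcard⟩
    exact Set.mem_iUnion₂.mpr ⟨M, hM𝓜, hMnc⟩
  have hstep1 : prob μ {G | (toSimpleGraph G).Connected}ᶜ
      ≤ ∑ M ∈ 𝓜, prob μ {G | ∀ D ∈ G, D ∈ NCset M} := by
    refine le_trans (μ.toOuterMeasure_mono hsub) ?_
    exact MeasureTheory.measure_biUnion_finset_le 𝓜 _
  have hstep2 : ∑ M ∈ 𝓜, prob μ {G | ∀ D ∈ G, D ∈ NCset M}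
      ≤ ∑ M ∈ 𝓜, x ^ (M.card * ((n - M.card).choose 2)) :=
    Finset.sum_le_sum fun M _ => prob_NC_le h0 h1 M
  have hsub2 : 𝓜 ⊆ (Finset.Icc 1 (n / 2)).biUnion
      (fun m => (Finset.univ : Finset (Fin n)).powersetCard m) := by
    intro M hM
    rw [h𝓜, Finset.mem_filter] at hM
    obtain ⟨-, hne, hcard⟩ := hM
    rw [Finset.mem_biUnion]
    refine ⟨M.card, ?_, ?_⟩
    · rw [Finset.mem_Icc]
      have := hne.card_pos
      omega
    · rw [Finset.mem_powersetCard]; exact ⟨Finset.subset_univ M, rfl⟩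
  have hstep3 : ∑ M ∈ 𝓜, x ^ (M.card * ((n - M.card).choose 2))
      ≤ ∑ m ∈ Finset.Icc 1 (n / 2),
          (n.choose m : ℝ≥0∞) * x ^ (m * ((n - m).choose 2)) := by
    refine le_trans (Finset.sum_le_sum_of_subset hsub2) ?_
    rw [Finset.sum_biUnion (fun i _ j _ hij =>
      Finset.univ.pairwise_disjoint_powersetCard hij)]
    refine Finset.sum_le_sum fun m _ => le_of_eq ?_
    rw [Finset.sum_congr rfl (fun M hM => by
      rw [(Finset.mem_powersetCard.mp hM).2]),
      Finset.sum_const, Finset.card_powersetCard, Finset.card_univ, Fintype.card_fin,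
      nsmul_eq_mul]
  have hstep4 : ∀ m ∈ Finset.Icc 1 (n / 2),
      (n.choose m : ℝ≥0∞) * x ^ (m * ((n - m).choose 2))
        ≤ ENNReal.ofReal (((n : ℝ) ^ 2)⁻¹) := by
    intro m hm
    rw [Finset.mem_Icc] at hm
    have hb0 : (0 : ℝ) ≤ 1 - 2 * pr / 3 := by linarith
    have heq : (n.choose m : ℝ≥0∞) * x ^ (m * ((n - m).choose 2))
        = ENNReal.ofReal ((n.choose m : ℝ)
            * (1 - 2 * pr / 3) ^ (m * ((n - m).choose 2))) := by
      rw [ENNReal.ofReal_mul (by positivity), ← ENNReal.ofReal_pow hb0,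
        ENNReal.ofReal_natCast]
    rw [heq]
    apply ENNReal.ofReal_le_ofReal
    exact real_term_bound h0 h1 hn hlog hm.1 (by omega)
  have hstep5 : ∑ m ∈ Finset.Icc 1 (n / 2), ENNReal.ofReal (((n : ℝ) ^ 2)⁻¹)
      ≤ ENNReal.ofReal ((n : ℝ))⁻¹ := by
    rw [Finset.sum_const, nsmul_eq_mul, Nat.card_Icc]
    have hcard : (n / 2 + 1 - 1 : ℕ) = n / 2 := by omega
    rw [hcard]
    rw [show ((n / 2 : ℕ) : ℝ≥0∞) = ENNReal.ofReal ((n / 2 : ℕ) : ℝ) from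
      (ENNReal.ofReal_natCast _).symm, ← ENNReal.ofReal_mul (by positivity)]
    apply ENNReal.ofReal_le_ofReal
    have hN0 : (0 : ℝ) < (n : ℝ) := by
      have : 0 < n := by omega
      exact_mod_cast this
    have hle : ((n / 2 : ℕ) : ℝ) ≤ (n : ℝ) := by
      exact_mod_cast Nat.div_le_self n 2
    calc ((n / 2 : ℕ) : ℝ) * ((n : ℝ) ^ 2)⁻¹ ≤ (n : ℝ) * ((n : ℝ) ^ 2)⁻¹ :=
        mul_le_mul_of_nonneg_right hle (by positivity)
      _ = ((n : ℝ))⁻¹ := by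
        field_simp
  calc prob μ {G | (toSimpleGraph G).Connected}ᶜ
      ≤ ∑ M ∈ 𝓜, prob μ {G | ∀ D ∈ G, D ∈ NCset M} := hstep1
    _ ≤ ∑ M ∈ 𝓜, x ^ (M.card * ((n - M.card).choose 2)) := hstep2
    _ ≤ ∑ m ∈ Finset.Icc 1 (n / 2),
          (n.choose m : ℝ≥0∞) * x ^ (m * ((n - m).choose 2)) := hstep3
    _ ≤ ∑ m ∈ Finset.Icc 1 (n / 2), ENNReal.ofReal (((n : ℝ) ^ 2)⁻¹) :=
        Finset.sum_le_sum hstep4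
    _ ≤ ENNReal.ofReal ((n : ℝ))⁻¹ := hstep5

end ConnAux

/-- Connectivity threshold (upper side) for `G(n, p_n; C([n],3))`: if
`p_n n² / log n → ∞` then the multigraph is connected with probability tending to `1`. -/
theorem tendsto_one_connected (p : ℕ → ℝ) (hp : ∀ n, 0 ≤ p n ∧ p n ≤ 1)
    (h : Tendsto (fun n => p n * (n : ℝ) ^ 2 / Real.log n) atTop atTop) :
    Tendsto (fun n => prob (modelPMF (ENNReal.ofReal (p n)) (allSets n 3))
        {G | (toSimpleGraph G).Connected}) atTop (nhds 1) := by
  have key : Tendsto (fun n => prob (modelPMF (ENNReal.ofReal (p n)) (allSets n 3))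
      {G | (toSimpleGraph G).Connected}ᶜ) atTop (nhds 0) := by
    have hub : ∀ᶠ n : ℕ in atTop,
        prob (modelPMF (ENNReal.ofReal (p n)) (allSets n 3))
            {G | (toSimpleGraph G).Connected}ᶜ
          ≤ ENNReal.ofReal ((n : ℝ))⁻¹ := by
      filter_upwards [h.eventually_ge_atTop 72, eventually_ge_atTop 8] with n h72 hn8
      have hn1 : (1 : ℝ) < (n : ℝ) := by
        have : (1 : ℕ) < n := by omega
        exact_mod_cast this
      have hlogpos : 0 < Real.log n := Real.log_pos hn1
      have hlog : 72 * Real.log n ≤ p n * (n : ℝ) ^ 2 := by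
        rw [le_div_iff₀ hlogpos] at h72
        linarith
      exact main_bound (hp n).1 (hp n).2 hn8 hlog
    have hlim : Tendsto (fun n : ℕ => ENNReal.ofReal ((n : ℝ))⁻¹) atTop (nhds 0) := by
      rw [show (0 : ℝ≥0∞) = ENNReal.ofReal 0 by simp]
      exact ENNReal.tendsto_ofReal
        (tendsto_inv_atTop_zero.comp tendsto_natCast_atTop_atTop)
    exact tendsto_of_tendsto_of_tendsto_of_le_of_le' tendsto_const_nhds hlim
      (Eventually.of_forall fun n => zero_le) hub
  have heq : ∀ n : ℕ, prob (modelPMF (ENNReal.ofReal (p n)) (allSets n 3))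
      {G | (toSimpleGraph G).Connected}
      = 1 - prob (modelPMF (ENNReal.ofReal (p n)) (allSets n 3))
        {G | (toSimpleGraph G).Connected}ᶜ := fun n => prob_compl _ _
  simp only [heq]
  have hsub := ENNReal.Tendsto.sub (tendsto_const_nhds
    (x := (1 : ℝ≥0∞)) (f := (atTop : Filter ℕ))) key (Or.inr ENNReal.zero_ne_top)
  simpa using hsub
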